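/- Let n ≥ 1 and let M be an n×n matrix with integer entries such that det M = 1 or det M = -1, and suppose the entries of the powers of M grow at most polynomially: there exist constants c > 0 and d ∈ ℕ such that |(M^r)_{i,j}| ≤ c·(r+1)^d for every natural number r and all indices i, j. Then every complex eigenvalue of M (i.e., every complex root of the characteristic polynomial of M) is a root of unity. -/

import Mathlib

open Polynomial Matrix

private lemma aux_prod_le_one (s : Multiset ℝ) (h : ∀ x ∈ s, 0 ≤ x ∧ x ≤ 1) :
    s.prod ≤ 1 := by
  induction s using Multiset.induction with
  | empty => simp
  | cons a t ih =>
    rw [Multiset.prod_cons]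
    have ha := h a (Multiset.mem_cons_self a t)
    have ht := ih (fun x hx => h x (Multiset.mem_cons_of_mem hx))
    have htnn : 0 ≤ t.prod := Multiset.prod_nonneg (fun x hx => (h x (Multiset.mem_cons_of_mem hx)).1)
    calc a * t.prod ≤ 1 * 1 := mul_le_mul ha.2 ht htnn zero_le_one
    _ = 1 := mul_one 1

private lemma aux_norm_prod (s : Multiset ℂ) :
    ‖s.prod‖ = (s.map (fun z => ‖z‖)).prod := by
  induction s using Multiset.induction with
  | empty => simp
  | cons a t ih => simp [ih]

private lemma aux_tendsto (d : ℕ) (s : ℝ) (h0 : 0 < s) (h1 : s < 1) :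
    Filter.Tendsto (fun r : ℕ => ((r : ℝ) + 1) ^ d * s ^ r) Filter.atTop (nhds 0) := by
  have h := (summable_pow_mul_geometric_of_norm_lt_one d
    (by simpa [abs_of_nonneg h0.le] using h1 : ‖s‖ < 1)).tendsto_atTop_zero
  have h2 := h.comp (Filter.tendsto_add_atTop_nat 1)
  have h3 := h2.const_mul (s⁻¹)
  simp only [mul_zero] at h3
  convert h3 using 2 with r
  simp only [Function.comp_apply]
  push_cast
  field_simp
  ring

private lemma aux_eval_charpoly {n : ℕ} (A : Matrix (Fin n) (Fin n) ℂ) (μ : ℂ) :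
    A.charpoly.eval μ = (Matrix.scalar (Fin n) μ - A).det := by
  rw [Matrix.charpoly, _root_.eval_det, matPolyEquiv_charmatrix]
  simp

/-- Every root of the characteristic polynomial has norm at most 1. -/
private lemma aux_norm_le_one (n : ℕ) (M : Matrix (Fin n) (Fin n) ℤ)
    (c : ℝ) (d : ℕ) (hc : 0 < c)
    (hb : ∀ (r : ℕ) (i j : Fin n), |((M ^ r) i j : ℝ)| ≤ c * (r + 1) ^ d)
    (μ : ℂ) (hμ : ((M.map (Int.cast : ℤ → ℂ)).charpoly).IsRoot μ) : ‖μ‖ ≤ 1 := by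
  by_contra hcon
  push_neg at hcon
  set A := M.map (Int.cast : ℤ → ℂ) with hA
  have hdet0 : (Matrix.scalar (Fin n) μ - A).det = 0 := by
    rw [← aux_eval_charpoly]; exact hμ
  obtain ⟨v, hv, hmul⟩ := Matrix.exists_mulVec_eq_zero_iff.mpr hdet0
  have hAv : A.mulVec v = μ • v := by
    have h1 : (Matrix.scalar (Fin n) μ - A).mulVec v
        = (Matrix.scalar (Fin n) μ).mulVec v - A.mulVec v := Matrix.sub_mulVec _ _ _
    have h2 : (Matrix.scalar (Fin n) μ).mulVec v = μ • v := by
      funext x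
      rw [Matrix.scalar_apply, Matrix.mulVec_diagonal]
      simp
    rw [hmul, h2] at h1
    exact (sub_eq_zero.mp h1.symm).symm
  have hpow : ∀ r : ℕ, (A ^ r).mulVec v = μ ^ r • v := by
    intro r
    induction r with
    | zero => simp
    | succ r ih =>
      rw [pow_succ, pow_succ, ← Matrix.mulVec_mulVec, hAv, Matrix.mulVec_smul, ih,
        smul_smul, mul_comm]
  obtain ⟨i, hvi⟩ : ∃ i, v i ≠ 0 := by
    by_contra hall
    push_neg at hall
    exact hv (funext hall)
  have hvipos : 0 < ‖v i‖ := norm_pos_iff.mpr hvi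
  set B := ∑ j, ‖v j‖ with hB
  have hentry : ∀ (r : ℕ) (i j : Fin n), ‖(A ^ r) i j‖ ≤ c * (r + 1) ^ d := by
    intro r i j
    have : A ^ r = (M ^ r).map (Int.cast : ℤ → ℂ) := by
      simpa using ((Int.castRingHom ℂ).mapMatrix.map_pow M r).symm
    rw [this]
    simpa using hb r i j
  have key : ∀ r : ℕ, ‖μ‖ ^ r * ‖v i‖ ≤ c * (r + 1) ^ d * B := by
    intro r
    have h1 : ((A ^ r).mulVec v) i = μ ^ r * v i := by
      rw [hpow r]; simp
    have h2 : ‖μ‖ ^ r * ‖v i‖ = ‖((A ^ r).mulVec v) i‖ := by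
      rw [h1, norm_mul, norm_pow]
    rw [h2]
    calc ‖((A ^ r).mulVec v) i‖ = ‖∑ j, (A ^ r) i j * v j‖ := rfl
    _ ≤ ∑ j, ‖(A ^ r) i j * v j‖ := norm_sum_le _ _
    _ ≤ ∑ j, (c * (r + 1) ^ d) * ‖v j‖ := by
        refine Finset.sum_le_sum (fun j _ => ?_)
        rw [norm_mul]
        exact mul_le_mul_of_nonneg_right (hentry r i j) (norm_nonneg _)
    _ = c * (r + 1) ^ d * B := by rw [← Finset.mul_sum]
  set s : ℝ := ‖μ‖⁻¹ with hs
  have hs0 : 0 < s := inv_pos.mpr (lt_trans one_pos hcon)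
  have hs1 : s < 1 := by
    rw [hs, inv_lt_one_iff₀]; right; exact hcon
  have hkey2 : ∀ r : ℕ, ‖v i‖ ≤ (c * B) * (((r : ℝ) + 1) ^ d * s ^ r) := by
    intro r
    have hμpos : (0:ℝ) < ‖μ‖ := lt_trans one_pos hcon
    have hμpow : (0:ℝ) < ‖μ‖ ^ r := pow_pos hμpos r
    have e1 : ‖v i‖ = s ^ r * (‖μ‖ ^ r * ‖v i‖) := by
      rw [hs, inv_pow, ← mul_assoc, inv_mul_cancel₀ hμpow.ne', one_mul]
    rw [e1]
    calc s ^ r * (‖μ‖ ^ r * ‖v i‖) ≤ s ^ r * (c * (r + 1) ^ d * B) :=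
        mul_le_mul_of_nonneg_left (key r) (pow_nonneg hs0.le r)
    _ = (c * B) * (((r : ℝ) + 1) ^ d * s ^ r) := by ring
  have htend := (aux_tendsto d s hs0 hs1).const_mul (c * B)
  simp only [mul_zero] at htend
  have : (0:ℝ) ≥ ‖v i‖ := ge_of_tendsto' htend hkey2
  linarith

theorem stmt_0 (n : ℕ) (hn : 1 ≤ n) (M : Matrix (Fin n) (Fin n) ℤ)
    (hdet : M.det = 1 ∨ M.det = -1)
    (hgrowth : ∃ (c : ℝ) (d : ℕ), 0 < c ∧
      ∀ (r : ℕ) (i j : Fin n), |((M ^ r) i j : ℝ)| ≤ c * (r + 1) ^ d)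
    (lam : ℂ) (hlam : ((M.map (Int.cast : ℤ → ℂ)).charpoly).IsRoot lam) :
    ∃ k : ℕ, 0 < k ∧ lam ^ k = 1 := by
  obtain ⟨c, d, hc, hb⟩ := hgrowth
  set A := M.map (Int.cast : ℤ → ℂ) with hA
  set p := M.charpoly with hp
  have hpmap : A.charpoly = p.map (Int.castRingHom ℂ) := Matrix.charpoly_map M (Int.castRingHom ℂ)
  have hpC0 : A.charpoly ≠ 0 := (Matrix.charpoly_monic A).ne_zero
  -- all roots have norm 1
  have hdetA : ‖A.det‖ = 1 := by
    have : A.det = (M.det : ℂ) := ((Int.castRingHom ℂ).map_det M).symm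
    rw [this]
    rcases hdet with h | h <;> simp [h]
  have hprod : A.det = A.charpoly.roots.prod := Matrix.det_eq_prod_roots_charpoly A
  have hnormprod : (A.charpoly.roots.map (fun z => ‖z‖)).prod = 1 := by
    rw [← aux_norm_prod, ← hprod, hdetA]
  have hle : ∀ μ ∈ A.charpoly.roots, ‖μ‖ ≤ 1 := fun μ hμ =>
    aux_norm_le_one n M c d hc hb μ (isRoot_of_mem_roots hμ)
  have hnorm_eq_one : ∀ μ ∈ A.charpoly.roots, ‖μ‖ = 1 := by
    intro μ hμ
    refine le_antisymm (hle μ hμ) ?_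
    have hmem : ‖μ‖ ∈ A.charpoly.roots.map (fun z => ‖z‖) := Multiset.mem_map_of_mem _ hμ
    obtain ⟨t, ht⟩ := Multiset.exists_cons_of_mem hmem
    have htle : t.prod ≤ 1 := by
      refine aux_prod_le_one t (fun x hx => ?_)
      have hx' : x ∈ A.charpoly.roots.map (fun z => ‖z‖) := by
        rw [ht]; exact Multiset.mem_cons_of_mem hx
      obtain ⟨z, hz, rfl⟩ := Multiset.mem_map.mp hx'
      exact ⟨norm_nonneg z, hle z hz⟩
    have htnn : 0 ≤ t.prod := by
      refine Multiset.prod_nonneg (fun x hx => ?_)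
      have hx' : x ∈ A.charpoly.roots.map (fun z => ‖z‖) := by
        rw [ht]; exact Multiset.mem_cons_of_mem hx
      obtain ⟨z, hz, rfl⟩ := Multiset.mem_map.mp hx'
      exact norm_nonneg z
    have : ‖μ‖ * t.prod = 1 := by rw [← Multiset.prod_cons, ← ht, hnormprod]
    nlinarith [norm_nonneg μ]
  -- lam is an algebraic integer
  have haev : ∀ z : ℂ, Polynomial.aeval z p = A.charpoly.eval z := by
    intro z
    rw [Polynomial.aeval_def, ← Polynomial.eval_map, hpmap]
    rfl
  have hint : IsIntegral ℤ lam := ⟨p, M.charpoly_monic, by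
    rw [← Polynomial.aeval_def] at *
    rw [show (Polynomial.aeval lam) p = A.charpoly.eval lam from haev lam]
    exact hlam⟩
  have hintQ : IsIntegral ℚ lam := hint.tower_top
  -- build the number field ℚ(lam)
  let K := IntermediateField.adjoin ℚ ({lam} : Set ℂ)
  haveI : FiniteDimensional ℚ K := IntermediateField.adjoin.finiteDimensional hintQ
  haveI : NumberField K := ⟨⟩
  let x : K := IntermediateField.AdjoinSimple.gen ℚ lam
  have hxmap : (algebraMap K ℂ) x = lam := IntermediateField.AdjoinSimple.algebraMap_gen ℚ lam
  have hxint : IsIntegral ℤ x := by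
    rw [← isIntegral_algebraMap_iff (algebraMap K ℂ).injective, hxmap]
    exact hint
  have haevx : Polynomial.aeval x p = 0 := by
    have : (algebraMap K ℂ) (Polynomial.aeval x p) = 0 := by
      rw [← Polynomial.aeval_algebraMap_apply, hxmap, haev lam]
      exact hlam
    exact (map_eq_zero_iff _ (algebraMap K ℂ).injective).mp this
  have hnormx : ∀ φ : K →+* ℂ, ‖φ x‖ = 1 := by
    intro φ
    have hroot : A.charpoly.eval (φ x) = 0 := by
      rw [← haev (φ x)]
      have := Polynomial.aeval_algHom_apply φ.toIntAlgHom x p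
      rw [haevx, map_zero] at this
      exact this
    have hmem : φ x ∈ A.charpoly.roots := by
      rw [Polynomial.mem_roots hpC0]
      exact hroot
    exact hnorm_eq_one _ hmem
  obtain ⟨k, hk, hxk⟩ := NumberField.Embeddings.pow_eq_one_of_norm_eq_one K ℂ hxint hnormx
  refine ⟨k, hk, ?_⟩
  rw [← hxmap, ← map_pow, hxk, _root_.map_one]
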